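/- Let K be a field of characteristic zero, R = K[x,y,z,u,v] acting on S = K[X,Y,Z,U,V] by differentiation, and F = X·U^{d-1} + Y·U^{d-2}·V + Z·V^{d-1} with d ≥ 5. Then for any a_0, a_2 ∈ K, the linear form ℓ = a_0·x + a_2·z satisfies ℓ^2 ∘ (G·F) = 0 for every G ∈ R, i.e., ℓ^2 = 0 in A_F = R/Ann(F). -/

import Mathlib

open MvPolynomial

/-- The apolarity action `p ∘ F` of a polynomial `p` (in the "differential
operator" variables) on a polynomial `F`: each variable of `p` acts as the
partial derivative with respect to the corresponding variable of `F`. -/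
noncomputable def act {K : Type*} [CommSemiring K] {n : ℕ}
    (p F : MvPolynomial (Fin n) K) : MvPolynomial (Fin n) K :=
  (AddMonoidAlgebra.coeff p).sum fun m c =>
    c • ((((List.finRange n).map fun i =>
      (((pderiv i).toLinearMap : Module.End K (MvPolynomial (Fin n) K)) ^ m i)).prod) F)

/-- `Ann F`: the set of differential operators annihilating `F`. -/
def annSet {K : Type*} [CommSemiring K] {n : ℕ} (F : MvPolynomial (Fin n) K) :
    Set (MvPolynomial (Fin n) K) := {p | act p F = 0}


section Machinery
variable {K : Type*} [CommSemiring K] {n : ℕ}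

lemma pderiv_comm' (i j : Fin n) (f : MvPolynomial (Fin n) K) :
    pderiv i (pderiv j f) = pderiv j (pderiv i f) := by
  induction f using MvPolynomial.induction_on with
  | C a => simp
  | add p q hp hq => simp [hp, hq]
  | mul_X p s hp =>
      simp [pderiv_mul, hp, Pi.single_apply, apply_ite (pderiv i), apply_ite (pderiv j)]; ring

/-- The derivation endomorphism. -/
noncomputable def E (i : Fin n) : Module.End K (MvPolynomial (Fin n) K) :=
  ((pderiv i).toLinearMap : Module.End K (MvPolynomial (Fin n) K))

lemma E_comm (i j : Fin n) : Commute (E (K := K) i) (E j) := by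
  apply LinearMap.ext
  intro f
  simp [E, Module.End.mul_apply, pderiv_comm']

/-- The monomial differential operator. -/
noncomputable def D (m : Fin n →₀ ℕ) : Module.End K (MvPolynomial (Fin n) K) :=
  (((List.finRange n).map fun i => (E i) ^ m i)).prod

lemma act_eq (p F : MvPolynomial (Fin n) K) :
    act p F = (AddMonoidAlgebra.coeff p).sum fun m c => c • (D m F) := rfl

lemma D_add (m m' : Fin n →₀ ℕ) : D (K := K) (m + m') = D m * D m' := by
  unfold D
  generalize List.finRange n = l
  induction l with
  | nil => simp
  | cons a l ih =>
      have hc : Commute (E (K := K) a ^ m' a)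
          ((List.map (fun i => E (K := K) i ^ m i) l).prod) := by
        apply Commute.list_prod_right
        intro x hx
        simp only [List.mem_map] at hx
        obtain ⟨j, _, rfl⟩ := hx
        exact (E_comm a j).pow_pow _ _
      rw [List.map_cons, List.prod_cons, ih, List.map_cons, List.prod_cons,
        List.map_cons, List.prod_cons]
      simp only [Finsupp.add_apply, pow_add]
      rw [hc.mul_mul_mul_comm]

lemma act_monomial (m : Fin n →₀ ℕ) (c : K) (F : MvPolynomial (Fin n) K) :
    act (monomial m c) F = c • D m F := by
  rw [act_eq]
  exact Finsupp.sum_single_index (by simp)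

lemma act_add (p q F : MvPolynomial (Fin n) K) :
    act (p + q) F = act p F + act q F := by
  rw [act_eq, act_eq, act_eq]
  exact Finsupp.sum_add_index' (by simp) (by intro m c c'; rw [add_smul])

lemma act_zero_right (p : MvPolynomial (Fin n) K) : act p 0 = 0 := by
  rw [act_eq]
  simp [Finsupp.sum]

lemma act_monomial_mul (m : Fin n →₀ ℕ) (c : K) (q F : MvPolynomial (Fin n) K) :
    act (monomial m c * q) F = c • D m (act q F) := by
  induction q using MvPolynomial.induction_on' with
  | monomial m' c' =>
      rw [monomial_mul, act_monomial, act_monomial, D_add]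
      simp [mul_smul, Module.End.mul_apply]
  | add q1 q2 h1 h2 =>
      rw [mul_add, act_add, act_add, h1, h2, map_add, smul_add]

lemma act_mul (p q F : MvPolynomial (Fin n) K) :
    act (p * q) F = act p (act q F) := by
  induction p using MvPolynomial.induction_on' with
  | monomial m c => rw [act_monomial_mul, act_monomial]
  | add p1 p2 h1 h2 => rw [add_mul, act_add, act_add, h1, h2]


lemma prod_single_not_mem (i : Fin n) (l : List (Fin n)) (h : i ∉ l) :
    (l.map fun j => E (K := K) j ^ (Finsupp.single i 1) j).prod = 1 := by
  apply List.prod_eq_one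
  intro x hx
  simp only [List.mem_map] at hx
  obtain ⟨j, hj, rfl⟩ := hx
  have : i ≠ j := fun hij => h (hij ▸ hj)
  simp [Finsupp.single_apply, this]

lemma prod_single_mem (i : Fin n) (l : List (Fin n)) (hnd : l.Nodup) (hmem : i ∈ l) :
    (l.map fun j => E (K := K) j ^ (Finsupp.single i 1) j).prod = E i := by
  induction l with
  | nil => simp at hmem
  | cons a l ih =>
      rw [List.map_cons, List.prod_cons]
      rcases eq_or_ne a i with rfl | hne
      · rw [prod_single_not_mem a l (List.nodup_cons.mp hnd).1]
        simp
      · have h0 : (Finsupp.single i 1) a = 0 := by simp [Finsupp.single_apply, hne.symm]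
        rw [h0, pow_zero, one_mul]
        exact ih (List.nodup_cons.mp hnd).2
          (by rcases List.mem_cons.mp hmem with h | h
              · exact absurd h.symm hne
              · exact h)

lemma D_single (i : Fin n) : D (K := K) (Finsupp.single i 1) = E i :=
  prod_single_mem i _ (List.nodup_finRange n) (List.mem_finRange i)

lemma act_C_mul_X (a : K) (i : Fin n) (F : MvPolynomial (Fin n) K) :
    act (C a * X i) F = a • pderiv i F := by
  rw [show (C a * X i : MvPolynomial (Fin n) K) = monomial (Finsupp.single i 1) a by
    rw [X, C_apply, monomial_mul]; simp, act_monomial]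
  rw [D_single]
  rfl

end Machinery

/-- With `R = K[x,y,z,u,v]` acting on `S = K[X,Y,Z,U,V]` by
differentiation (variables indexed `0,...,4`), `K` of characteristic zero, and
`F = X·U^{d-1} + Y·U^{d-2}·V + Z·V^{d-1}` with `d ≥ 5`, for any `a₀, a₂ ∈ K`
the linear form `ℓ = a₀x + a₂z` satisfies `ℓ²·G ∘ F = 0` for every `G ∈ R`,
i.e. `ℓ² = 0` in `A_F = R/Ann F`. -/
theorem stmt7 {K : Type*} [Field K] [CharZero K] (d : ℕ) (hd : 5 ≤ d)
    (F : MvPolynomial (Fin 5) K)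
    (hF : F = X 0 * X 3 ^ (d - 1) + X 1 * X 3 ^ (d - 2) * X 4
      + X 2 * X 4 ^ (d - 1))
    (a₀ a₂ : K) (ℓ : MvPolynomial (Fin 5) K)
    (hℓ : ℓ = C a₀ * X 0 + C a₂ * X 2) :
    ∀ G : MvPolynomial (Fin 5) K, act (ℓ ^ 2 * G) F = 0 := by
  intro G
  have hl2 : ℓ ^ 2 * G = G * ℓ * ℓ := by ring
  rw [hl2, act_mul, act_mul]
  have hact : ∀ F' : MvPolynomial (Fin 5) K,
      act ℓ F' = a₀ • pderiv 0 F' + a₂ • pderiv 2 F' := by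
    intro F'
    rw [hℓ, act_add, act_C_mul_X, act_C_mul_X]
  have h00 : pderiv (0 : Fin 5) (pderiv (0 : Fin 5) F) = 0 := by
    simp [hF, pderiv_mul, pderiv_pow, pderiv_X_self,
      pderiv_X_of_ne (show (3:Fin 5) ≠ 0 by decide),
      pderiv_X_of_ne (show (4:Fin 5) ≠ 0 by decide),
      pderiv_X_of_ne (show (1:Fin 5) ≠ 0 by decide),
      pderiv_X_of_ne (show (2:Fin 5) ≠ 0 by decide)]
  have h20 : pderiv (2 : Fin 5) (pderiv (0 : Fin 5) F) = 0 := by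
    simp [hF, pderiv_mul, pderiv_pow, pderiv_X_self,
      pderiv_X_of_ne (show (3:Fin 5) ≠ 0 by decide),
      pderiv_X_of_ne (show (4:Fin 5) ≠ 0 by decide),
      pderiv_X_of_ne (show (1:Fin 5) ≠ 0 by decide),
      pderiv_X_of_ne (show (2:Fin 5) ≠ 0 by decide),
      pderiv_X_of_ne (show (3:Fin 5) ≠ 2 by decide),
      pderiv_X_of_ne (show (4:Fin 5) ≠ 2 by decide)]
  have h02 : pderiv (0 : Fin 5) (pderiv (2 : Fin 5) F) = 0 := by
    rw [pderiv_comm']; exact h20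
  have h22 : pderiv (2 : Fin 5) (pderiv (2 : Fin 5) F) = 0 := by
    simp [hF, pderiv_mul, pderiv_pow, pderiv_X_self,
      pderiv_X_of_ne (show (3:Fin 5) ≠ 2 by decide),
      pderiv_X_of_ne (show (4:Fin 5) ≠ 2 by decide),
      pderiv_X_of_ne (show (0:Fin 5) ≠ 2 by decide),
      pderiv_X_of_ne (show (1:Fin 5) ≠ 2 by decide)]
  have hz : act ℓ (act ℓ F) = 0 := by
    rw [hact, hact]
    simp [map_smul, h00, h20, h02, h22]
  rw [hz, act_zero_right]
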